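/- Let w = x φ^μ y ∈ W̃ with μ dominant, x, y ∈ W₀ and φ^μ y ∈ ^S W̃. Define LP(w) = {v ∈ W₀ : ⟨vα, y^{-1}μ⟩ + δ⁺(vα) − δ⁺(xyvα) ≥ 0 for all α ∈ Φ₊}, where δ⁺ is the indicator function of positive roots. Then y^{-1} ∈ LP(w); in particular LP(w) is nonempty. -/

import Mathlib

/-- for w = x φ^μ y with μ dominant and φ^μ y ∈ ^S W̃ (characterized by
⟨α, μ⟩ ≥ δ⁺(−y⁻¹α) for all positive roots α = χ_{ij}, i < j), the element y⁻¹ lies in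
LP(w) = {v : ⟨vα, y⁻¹μ⟩ + δ⁺(vα) − δ⁺(xyvα) ≥ 0 for all α ∈ Φ₊}; in particular LP(w)
is nonempty. Here (y⁻¹μ)(t) = μ(y t), vχ_{ij} = χ_{v(i),v(j)}. -/
theorem stmt_10 (n : ℕ) (μ : Fin n → ℤ) (x y : Equiv.Perm (Fin n))
    (hdom : ∀ i j : Fin n, i ≤ j → μ j ≤ μ i)
    (hy : ∀ i j : Fin n, i < j → (if y⁻¹ j < y⁻¹ i then (1 : ℤ) else 0) ≤ μ i - μ j)
    (LP : Set (Equiv.Perm (Fin n)))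
    (hLP : LP = {v | ∀ i j : Fin n, i < j →
      (0 : ℤ) ≤ μ (y (v i)) - μ (y (v j)) + (if v i < v j then 1 else 0) -
        (if x (y (v i)) < x (y (v j)) then 1 else 0)}) :
    y⁻¹ ∈ LP ∧ LP.Nonempty := by
  have hmem : y⁻¹ ∈ LP := by
    subst hLP
    intro i j hij
    simp only [show ∀ a, y (y⁻¹ a) = a from fun a => y.apply_symm_apply a]
    have h1 := hy i j hij
    have h2 : μ j ≤ μ i := hdom i j hij.le
    have hne : y⁻¹ i ≠ y⁻¹ j := fun h => hij.ne (y⁻¹.injective h)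
    rcases lt_or_gt_of_ne hne with h | h
    · simp only [if_pos h, if_neg (not_lt.2 h.le)]
      simp only [if_pos h, if_neg (not_lt.2 h.le)] at h1
      split <;> omega
    · simp only [if_neg (not_lt.2 h.le), if_pos h] at h1 ⊢
      split <;> omega
  exact ⟨hmem, ⟨y⁻¹, hmem⟩⟩
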